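/- Let H be a Hilbert space, A and B self-adjoint (or closed) operators with |A|² ≤ |B|² as quadratic forms, and Y a bounded operator such that BY is trace class. Then AY is trace class and ‖AY‖₁ ≤ ‖BY‖₁. -/

import Mathlib

open MeasureTheory

variable {H : Type*} [NormedAddCommGroup H] [InnerProductSpace ℂ H] [CompleteSpace H]

local notation "⟪" x ", " y "⟫" => @inner ℂ _ _ x y

/-- The trace norm of a bounded operator, via the characterization
`‖T‖₁ = sup { Σₙ |⟨eₙ, T fₙ⟩| : (eₙ), (fₙ) orthonormal }` (valued in `ℝ≥0∞`;
`T` is trace class iff this is finite). -/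
noncomputable def traceNorm (T : H →L[ℂ] H) : ENNReal :=
  ⨆ (e : ℕ → H) (f : ℕ → H) (_ : Orthonormal ℂ e) (_ : Orthonormal ℂ f),
    ∑' n, (‖⟪e n, T (f n)⟫‖₊ : ENNReal)

open scoped ComplexOrder

set_option linter.unusedSectionVars false

lemma exists_orthonormal_seq {E : Type*} [NormedAddCommGroup E] [InnerProductSpace ℂ E]
    [CompleteSpace E] (h : ¬ FiniteDimensional ℂ E) : ∃ g : ℕ → E, Orthonormal ℂ g := by
  obtain ⟨w, b, hb⟩ := exists_hilbertBasis ℂ E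
  have hw : Infinite w := by
    by_contra hfin
    have : Finite w := not_infinite_iff_finite.mp hfin
    have hsf : w.Finite := Set.toFinite w
    have : FiniteDimensional ℂ ↥(Submodule.span ℂ w) := FiniteDimensional.span_of_finite ℂ hsf
    have hd : (Submodule.span ℂ w).topologicalClosure = ⊤ := by
      have := b.dense_span
      rwa [hb, Subtype.range_coe] at this
    have hc : IsClosed (Submodule.span ℂ w : Set E) := Submodule.closed_of_finiteDimensional _
    have htop : Submodule.span ℂ w = ⊤ := by
      rw [← hd, hc.submodule_topologicalClosure_eq]
    have : FiniteDimensional ℂ E := by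
      rw [htop] at this
      exact Module.Finite.equiv (Submodule.topEquiv (R := ℂ) (M := E))
    exact h this
  refine ⟨fun n => b (Infinite.natEmbedding w n), b.orthonormal.comp _ (Infinite.natEmbedding w).injective⟩

lemma not_finiteDimensional_of_orthonormal_seq (e : ℕ → H) (he : Orthonormal ℂ e) :
    ¬ FiniteDimensional ℂ H := by
  intro hfd
  have := (he.linearIndependent.comp (fun i : Fin (Module.finrank ℂ H + 1) => (i : ℕ))
    (fun a b hab => by exact Fin.ext (by simpa using hab))).fintype_card_le_finrank
  simp at this

lemma exists_repr (T S : H →L[ℂ] H) (h : ∀ x, ‖T x‖ ≤ ‖S x‖) (a : H) :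
    ∃ x : H, x ∈ (LinearMap.range (S : H →ₗ[ℂ] H)).topologicalClosure ∧
      ∀ u, ⟪x, S u⟫ = ⟪a, T u⟫ := by
  classical
  set Sl : H →ₗ[ℂ] H := (S : H →ₗ[ℂ] H) with hSl
  have hT0 : ∀ z, S z = 0 → T z = 0 := by
    intro z hz
    have := h z
    rw [hz, norm_zero] at this
    exact norm_le_zero_iff.mp this
  set φ : H →L[ℂ] ℂ := (innerSL ℂ a).comp T with hφ
  have hker : LinearMap.ker Sl ≤ LinearMap.ker (φ : H →ₗ[ℂ] ℂ) := by
    intro z hz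
    have hz' : S z = 0 := hz
    simp only [LinearMap.mem_ker, ContinuousLinearMap.coe_coe, hφ,
      ContinuousLinearMap.comp_apply, hT0 z hz']
    simp
  set ψl : ↥(LinearMap.range Sl) →ₗ[ℂ] ℂ :=
    ((LinearMap.ker Sl).liftQ (φ : H →ₗ[ℂ] ℂ) hker).comp
      (Sl.quotKerEquivRange.symm : ↥(LinearMap.range Sl) →ₗ[ℂ] (H ⧸ LinearMap.ker Sl)) with hψl
  have key : ∀ u : H, ψl ⟨Sl u, LinearMap.mem_range_self Sl u⟩ = ⟪a, T u⟫ := by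
    intro u
    simp only [hψl, LinearMap.comp_apply, LinearEquiv.coe_coe,
      LinearMap.quotKerEquivRange_symm_apply_image]
    rfl
  have bound : ∀ v : ↥(LinearMap.range Sl), ‖ψl v‖ ≤ ‖a‖ * ‖v‖ := by
    rintro ⟨v, hv⟩
    obtain ⟨u, hu⟩ := hv
    have hveq : (⟨v, ⟨u, hu⟩⟩ : ↥(LinearMap.range Sl)) = ⟨Sl u, LinearMap.mem_range_self Sl u⟩ :=
      Subtype.ext hu.symm
    rw [hveq, key]
    have h1 : ‖⟪a, T u⟫‖ ≤ ‖a‖ * ‖T u‖ := norm_inner_le_norm a (T u)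
    have h2 : ‖T u‖ ≤ ‖S u‖ := h u
    have h3 : ‖(⟨Sl u, LinearMap.mem_range_self Sl u⟩ : ↥(LinearMap.range Sl))‖ = ‖S u‖ := rfl
    rw [h3]
    exact h1.trans (by nlinarith [norm_nonneg a, norm_nonneg (S u)])
  set ψ : ↥(LinearMap.range Sl) →L[ℂ] ℂ := ψl.mkContinuous ‖a‖ bound with hψ
  obtain ⟨g, hg, -⟩ := exists_extension_norm_eq (LinearMap.range Sl) ψ
  set x0 : H := (InnerProductSpace.toDual ℂ H).symm g with hx0
  have hx0app : ∀ u : H, ⟪x0, u⟫ = g u := fun u => InnerProductSpace.toDual_symm_apply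
  set K := (LinearMap.range Sl).topologicalClosure with hK
  haveI : CompleteSpace K := (LinearMap.range Sl).isClosed_topologicalClosure.completeSpace_coe
  refine ⟨(K.orthogonalProjectionOnto x0 : H), (K.orthogonalProjectionOnto x0).2, fun u => ?_⟩
  have hSuK : S u ∈ K := Submodule.le_topologicalClosure _ (LinearMap.mem_range_self Sl u)
  have horth : ⟪x0 - (K.orthogonalProjectionOnto x0 : H), S u⟫ = 0 := by
    apply Submodule.inner_left_of_mem_orthogonal hSuK
    exact Submodule.sub_starProjection_mem_orthogonal (K := K) x0
  have hsub : ⟪x0, S u⟫ - ⟪(K.orthogonalProjectionOnto x0 : H), S u⟫ = 0 := by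
    rw [← inner_sub_left]; exact horth
  have : ⟪(K.orthogonalProjectionOnto x0 : H), S u⟫ = ⟪x0, S u⟫ := (sub_eq_zero.mp hsub).symm
  rw [this, hx0app (S u), hg ⟨S u, LinearMap.mem_range_self Sl u⟩]
  exact key u

lemma gram_bound (T S : H →L[ℂ] H) (h : ∀ x, ‖T x‖ ≤ ‖S x‖)
    {ι : Type*} [Fintype ι] (a : ι → H) (ha : Orthonormal ℂ a) (x : ι → H)
    (hxK : ∀ i, x i ∈ (LinearMap.range (S : H →ₗ[ℂ] H)).topologicalClosure)
    (hx : ∀ i u, ⟪x i, S u⟫ = ⟪a i, T u⟫)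
    (c : ι → ℂ) :
    ‖∑ i, c i • x i‖ ^ 2 ≤ ∑ i, ‖c i‖ ^ 2 := by
  classical
  set v : H := ∑ i, c i • x i with hv
  set w : H := ∑ i, c i • a i with hw
  have hw2 : ‖w‖ ^ 2 = ∑ i, ‖c i‖ ^ 2 := by
    have h3 := inner_self_eq_norm_sq (𝕜 := ℂ) w
    rw [hw, ha.inner_sum c c Finset.univ] at h3
    rw [← h3, map_sum]
    refine Finset.sum_congr rfl fun i _ => ?_
    rw [RCLike.conj_mul]
    simp [← Complex.ofReal_pow]
  have key : ∀ u : H, ‖⟪v, S u⟫‖ ≤ ‖w‖ * ‖S u‖ := by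
    intro u
    have h1 : ⟪v, S u⟫ = ⟪w, T u⟫ := by
      rw [hv, hw, sum_inner, sum_inner]
      refine Finset.sum_congr rfl fun i _ => ?_
      rw [inner_smul_left, inner_smul_left, hx i u]
    rw [h1]
    calc ‖⟪w, T u⟫‖ ≤ ‖w‖ * ‖T u‖ := norm_inner_le_norm _ _
      _ ≤ ‖w‖ * ‖S u‖ := by
          have := h u
          nlinarith [norm_nonneg w]
  have hvK : v ∈ (LinearMap.range (S : H →ₗ[ℂ] H)).topologicalClosure :=
    Submodule.sum_mem _ fun i _ => Submodule.smul_mem _ _ (hxK i)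
  have hvcl : v ∈ closure ((LinearMap.range (S : H →ₗ[ℂ] H) : Submodule ℂ H) : Set H) := hvK
  obtain ⟨b, hbmem, hblim⟩ := mem_closure_iff_seq_limit.mp hvcl
  have hvw : ‖v‖ ^ 2 ≤ ‖w‖ * ‖v‖ := by
    have hlim1 : Filter.Tendsto (fun n => ‖⟪v, b n⟫‖) Filter.atTop (nhds ‖⟪v, v⟫‖) :=
      ((Filter.Tendsto.inner tendsto_const_nhds hblim).norm)
    have hlim2 : Filter.Tendsto (fun n => ‖w‖ * ‖b n‖) Filter.atTop (nhds (‖w‖ * ‖v‖)) :=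
      (hblim.norm.const_mul _)
    have hev : ∀ n, ‖⟪v, b n⟫‖ ≤ ‖w‖ * ‖b n‖ := by
      intro n
      obtain ⟨u, hu⟩ := hbmem n
      rw [← hu]
      exact key u
    have := le_of_tendsto_of_tendsto' hlim1 hlim2 hev
    rw [inner_self_eq_norm_sq_to_K] at this
    simpa using this
  rw [← hw2]
  rcases eq_or_lt_of_le (norm_nonneg v) with h0 | h0
  · rw [← h0]
    simpa using Finset.sum_nonneg (fun i _ => sq_nonneg ‖c i‖)
  · nlinarith [norm_nonneg w]

open scoped MatrixOrder in
lemma key_step (T S : H →L[ℂ] H) (h : ∀ x, ‖T x‖ ≤ ‖S x‖)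
    (e f : ℕ → H) (he : Orthonormal ℂ e) (s : Finset ℕ) :
    ∃ y z : ℕ → H, Orthonormal ℂ y ∧ Orthonormal ℂ z ∧
      ∀ n ∈ s, (⟪e n, T (f n)⟫ : ℂ) = (⟪y n, S (f n)⟫ + ⟪z n, S (f n)⟫) / 2 := by
  classical
  choose x hxK hx using fun n : ℕ => exists_repr T S h (e n)
  -- Gram matrix on ↥s
  set G : Matrix { n // n ∈ s } { n // n ∈ s } ℂ := fun i j => ⟪x i, x j⟫ with hG
  have hGH : G.IsHermitian := by
    ext i j
    simp only [Matrix.conjTranspose_apply, hG, RCLike.star_def]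
    exact inner_conj_symm (𝕜 := ℂ) (x (↑i : ℕ)) (x (↑j : ℕ))
  have hPSD : (1 - G).PosSemidef := by
    refine Matrix.PosSemidef.of_dotProduct_mulVec_nonneg (Matrix.isHermitian_one.sub hGH) ?_
    intro c
    have hq : (dotProduct (star c) (Matrix.mulVec (1 - G) c)) =
        ((∑ i, ‖c i‖ ^ 2 : ℝ) : ℂ) - ((‖(∑ i, c i • x i)‖ ^ 2 : ℝ) : ℂ) := by
      rw [Matrix.sub_mulVec, dotProduct_sub, Matrix.one_mulVec]
      congr 1
      · rw [dotProduct]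
        push_cast
        refine Finset.sum_congr rfl fun i _ => ?_
        simp only [Pi.star_apply, RCLike.star_def]
        rw [RCLike.conj_mul]
        norm_num
      · rw [dotProduct]
        have : ∀ i, star c i * (Matrix.mulVec G c) i = ⟪c i • x i, ∑ j, c j • x j⟫ := by
          intro i
          rw [inner_smul_left, inner_sum, Matrix.mulVec, dotProduct]
          simp only [Pi.star_apply, RCLike.star_def]
          congr 1
          refine Finset.sum_congr rfl fun j _ => ?_
          rw [inner_smul_right]
          exact mul_comm _ _
        rw [Finset.sum_congr rfl fun i _ => this i, ← sum_inner,
          inner_self_eq_norm_sq_to_K]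
        norm_num
    rw [hq, ← Complex.ofReal_sub]
    rw [Complex.zero_le_real]
    have := gram_bound T S h (fun i : { n // n ∈ s } => e i)
      (he.comp _ Subtype.val_injective) (fun i => x i) (fun i => hxK i)
      (fun i u => hx i u) c
    linarith
  set M := CFC.sqrt (1 - G) with hM
  have hMH : M.IsHermitian := (Matrix.nonneg_iff_posSemidef.mp (CFC.sqrt_nonneg (1 - G))).1
  have hM2 : M * M = 1 - G := CFC.sqrt_mul_sqrt_self (1 - G) hPSD.nonneg
  -- fresh orthonormal vectors
  set F : Submodule ℂ H := Submodule.span ℂ (Set.range fun i : { n // n ∈ s } => x i) with hF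
  haveI : FiniteDimensional ℂ ↥F := FiniteDimensional.span_of_finite ℂ (Set.finite_range _)
  haveI : CompleteSpace ↥(Fᗮ) := F.isClosed_orthogonal.completeSpace_coe
  have hFinf : ¬ FiniteDimensional ℂ ↥(Fᗮ) := by
    intro hfd
    have htop : F ⊔ Fᗮ = ⊤ := Submodule.sup_orthogonal_of_hasOrthogonalProjection
    have : FiniteDimensional ℂ H := by
      haveI : FiniteDimensional ℂ ↥(F ⊔ Fᗮ) := Submodule.finiteDimensional_sup F Fᗮ
      rw [htop] at this
      exact Module.Finite.equiv (Submodule.topEquiv (R := ℂ) (M := H))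
    exact not_finiteDimensional_of_orthonormal_seq e he this
  obtain ⟨g0, hg0⟩ := exists_orthonormal_seq hFinf
  set g : ℕ → H := fun n => ((g0 n : H)) with hg
  have hgON : Orthonormal ℂ g := hg0.comp_linearIsometry Fᗮ.subtypeₗᵢ
  have hgF : ∀ n, g n ∈ Fᗮ := fun n => (g0 n).2
  have hxF : ∀ i : { n // n ∈ s }, x i ∈ F :=
    fun i => Submodule.subset_span (Set.mem_range_self i)
  have hxg : ∀ (i : { n // n ∈ s }) (m : ℕ), ⟪x i, g m⟫ = 0 :=
    fun i m => Submodule.inner_right_of_mem_orthogonal (hxF i) (hgF m)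
  have hgx : ∀ (m : ℕ) (i : { n // n ∈ s }), ⟪g m, x i⟫ = 0 :=
    fun m i => Submodule.inner_left_of_mem_orthogonal (hxF i) (hgF m)
  -- the correction vectors
  set w : { n // n ∈ s } → H := fun j => ∑ k, M k j • g k with hw
  have hxw : ∀ (i : { n // n ∈ s }) (j : { n // n ∈ s }), ⟪x i, w j⟫ = 0 := by
    intro i j
    rw [hw, inner_sum]
    refine Finset.sum_eq_zero fun k _ => ?_
    rw [inner_smul_right, hxg i k, mul_zero]
  have hwx : ∀ (i j : { n // n ∈ s }), ⟪w i, x j⟫ = 0 := by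
    intro i j
    rw [hw, sum_inner]
    refine Finset.sum_eq_zero fun k _ => ?_
    rw [inner_smul_left, hgx k j, mul_zero]
  have hww : ∀ (i j : { n // n ∈ s }), ⟪w i, w j⟫ = (1 - G) i j := by
    intro i j
    rw [hw]
    have hcomp : Orthonormal ℂ (fun k : { n // n ∈ s } => g k) :=
      hgON.comp _ Subtype.val_injective
    rw [hcomp.inner_sum (fun k => M k i) (fun k => M k j) Finset.univ]
    rw [← hM2, Matrix.mul_apply]
    refine Finset.sum_congr rfl fun k _ => ?_
    congr 1
    calc (starRingEnd ℂ) (M k i) = star (M k i) := rfl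
      _ = (Matrix.conjTranspose M) i k := (Matrix.conjTranspose_apply M k i).symm
      _ = M i k := by rw [hMH.eq]
  have hwg : ∀ (j : { n // n ∈ s }) (m : ℕ), m ∉ s → ⟪w j, g m⟫ = 0 := by
    intro j m hm
    rw [hw, sum_inner]
    refine Finset.sum_eq_zero fun k _ => ?_
    rw [inner_smul_left]
    have : ⟪g (k : ℕ), g m⟫ = 0 := by
      rw [orthonormal_iff_ite.mp hgON]
      simp only [ite_eq_right_iff]
      intro hkm
      exact absurd (hkm ▸ k.2) hm
    rw [this, mul_zero]
  have hgw : ∀ (m : ℕ), m ∉ s → ∀ (j : { n // n ∈ s }), ⟪g m, w j⟫ = 0 := by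
    intro m hm j
    rw [← inner_conj_symm, hwg j m hm, map_zero]
  -- define y and z
  refine ⟨fun n => if hn : n ∈ s then x n + w ⟨n, hn⟩ else g n,
    fun n => if hn : n ∈ s then x n - w ⟨n, hn⟩ else g n, ?_, ?_, ?_⟩
  · rw [orthonormal_iff_ite]
    intro i j
    by_cases hi : i ∈ s <;> by_cases hj : j ∈ s <;> simp only [hi, hj, dif_pos, dif_neg,
      not_false_iff]
    · rw [inner_add_left, inner_add_right, inner_add_right,
        hxw ⟨i, hi⟩ ⟨j, hj⟩, hwx ⟨i, hi⟩ ⟨j, hj⟩, hww ⟨i, hi⟩ ⟨j, hj⟩]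
      have hGij : (⟪x i, x j⟫ : ℂ) = G ⟨i, hi⟩ ⟨j, hj⟩ := rfl
      rw [hGij]
      simp only [Matrix.sub_apply, Matrix.one_apply, Subtype.mk.injEq]
      ring
    · have hne : i ≠ j := fun hij => hj (hij ▸ hi)
      rw [inner_add_left, hxg ⟨i, hi⟩ j, hwg ⟨i, hi⟩ j hj, add_zero]
      simp [hne]
    · have hne : i ≠ j := fun hij => hi (hij ▸ hj)
      rw [inner_add_right, hgx i ⟨j, hj⟩, hgw i hi ⟨j, hj⟩, add_zero]
      simp [hne]
    · exact orthonormal_iff_ite.mp hgON i j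
  · rw [orthonormal_iff_ite]
    intro i j
    by_cases hi : i ∈ s <;> by_cases hj : j ∈ s <;> simp only [hi, hj, dif_pos, dif_neg,
      not_false_iff]
    · rw [inner_sub_left, inner_sub_right, inner_sub_right,
        hxw ⟨i, hi⟩ ⟨j, hj⟩, hwx ⟨i, hi⟩ ⟨j, hj⟩, hww ⟨i, hi⟩ ⟨j, hj⟩]
      have hGij : (⟪x i, x j⟫ : ℂ) = G ⟨i, hi⟩ ⟨j, hj⟩ := rfl
      rw [hGij]
      simp only [Matrix.sub_apply, Matrix.one_apply, Subtype.mk.injEq]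
      ring
    · have hne : i ≠ j := fun hij => hj (hij ▸ hi)
      rw [inner_sub_left, hxg ⟨i, hi⟩ j, hwg ⟨i, hi⟩ j hj, sub_zero]
      simp [hne]
    · have hne : i ≠ j := fun hij => hi (hij ▸ hj)
      rw [inner_sub_right, hgx i ⟨j, hj⟩, hgw i hi ⟨j, hj⟩, sub_zero]
      simp [hne]
    · exact orthonormal_iff_ite.mp hgON i j
  · intro n hn
    have h1 : ⟪(if hm : n ∈ s then x n + w ⟨n, hm⟩ else g n), S (f n)⟫
        + ⟪(if hm : n ∈ s then x n - w ⟨n, hm⟩ else g n), S (f n)⟫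
        = 2 * ⟪x n, S (f n)⟫ := by
      rw [dif_pos hn, dif_pos hn, inner_add_left, inner_sub_left]
      ring
    rw [h1, hx n (f n)]
    ring

lemma traceNorm_mono (T S : H →L[ℂ] H) (h : ∀ x, ‖T x‖ ≤ ‖S x‖) :
    traceNorm T ≤ traceNorm S := by
  rw [traceNorm]
  refine iSup_le fun e => iSup_le fun f => iSup_le fun he => iSup_le fun hf => ?_
  rw [ENNReal.tsum_eq_iSup_sum]
  refine iSup_le fun s => ?_
  obtain ⟨y, z, hy, hz, hid⟩ := key_step T S h e f he s
  have hbound : ∀ v : ℕ → H, Orthonormal ℂ v →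
      ∑' n, (‖⟪v n, S (f n)⟫‖₊ : ENNReal) ≤ traceNorm S := by
    intro v hv
    rw [traceNorm]
    exact le_iSup_of_le v <| le_iSup_of_le f <| le_iSup_of_le hv <| le_iSup_of_le hf le_rfl
  have hys : ∑ n ∈ s, (‖⟪y n, S (f n)⟫‖₊ : ENNReal) ≤ traceNorm S :=
    (ENNReal.sum_le_tsum s).trans (hbound y hy)
  have hzs : ∑ n ∈ s, (‖⟪z n, S (f n)⟫‖₊ : ENNReal) ≤ traceNorm S :=
    (ENNReal.sum_le_tsum s).trans (hbound z hz)
  have hterm : ∀ n ∈ s, (‖⟪e n, T (f n)⟫‖₊ : ENNReal) ≤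
      2⁻¹ * ((‖⟪y n, S (f n)⟫‖₊ : ENNReal) + (‖⟪z n, S (f n)⟫‖₊ : ENNReal)) := by
    intro n hn
    have hr : ‖⟪e n, T (f n)⟫‖ ≤ 2⁻¹ * (‖⟪y n, S (f n)⟫‖ + ‖⟪z n, S (f n)⟫‖) := by
      rw [hid n hn]
      calc ‖(⟪y n, S (f n)⟫ + ⟪z n, S (f n)⟫) / 2‖
          = ‖⟪y n, S (f n)⟫ + ⟪z n, S (f n)⟫‖ / 2 := by
            rw [norm_div]
            norm_num
        _ ≤ (‖⟪y n, S (f n)⟫‖ + ‖⟪z n, S (f n)⟫‖) / 2 := by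
            have := norm_add_le (⟪y n, S (f n)⟫) (⟪z n, S (f n)⟫)
            linarith
        _ = 2⁻¹ * (‖⟪y n, S (f n)⟫‖ + ‖⟪z n, S (f n)⟫‖) := by ring
    have hnn : ‖⟪e n, T (f n)⟫‖₊ ≤ 2⁻¹ * (‖⟪y n, S (f n)⟫‖₊ + ‖⟪z n, S (f n)⟫‖₊) := by
      rw [← NNReal.coe_le_coe]
      push_cast
      exact hr
    calc (‖⟪e n, T (f n)⟫‖₊ : ENNReal)
        ≤ ((2⁻¹ * (‖⟪y n, S (f n)⟫‖₊ + ‖⟪z n, S (f n)⟫‖₊) : NNReal) : ENNReal) :=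
          ENNReal.coe_le_coe.mpr hnn
      _ = 2⁻¹ * ((‖⟪y n, S (f n)⟫‖₊ : ENNReal) + (‖⟪z n, S (f n)⟫‖₊ : ENNReal)) := by
          push_cast
          rfl
  calc ∑ n ∈ s, (‖⟪e n, T (f n)⟫‖₊ : ENNReal)
      ≤ ∑ n ∈ s, 2⁻¹ * ((‖⟪y n, S (f n)⟫‖₊ : ENNReal) + (‖⟪z n, S (f n)⟫‖₊ : ENNReal)) :=
        Finset.sum_le_sum hterm
    _ = 2⁻¹ * ∑ n ∈ s, (‖⟪y n, S (f n)⟫‖₊ : ENNReal)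
        + 2⁻¹ * ∑ n ∈ s, (‖⟪z n, S (f n)⟫‖₊ : ENNReal) := by
        rw [← Finset.mul_sum, Finset.sum_add_distrib, mul_add]
    _ ≤ 2⁻¹ * traceNorm S + 2⁻¹ * traceNorm S := by
        gcongr
    _ = traceNorm S := by
        rw [← add_mul, ENNReal.inv_two_add_inv_two, one_mul]

/-- Let A be a bounded operator and B a self-adjoint (possibly unbounded)
operator with `|A|² ≤ |B|²` as quadratic forms (i.e. `‖Ax‖ ≤ ‖Bx‖` on the domain of B), and
let Y be a bounded operator with range in the domain of B such that BY is trace class.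
Then AY is trace class and `‖AY‖₁ ≤ ‖BY‖₁`. -/
theorem traceNorm_comp_le_of_sq_le
    (A : H →L[ℂ] H) (B : H →ₗ.[ℂ] H) (hB : IsSelfAdjoint B)
    (hAB : ∀ (x : H) (hx : x ∈ B.domain), ‖A x‖ ≤ ‖B ⟨x, hx⟩‖)
    (Y : H →L[ℂ] H) (hYrange : ∀ g : H, Y g ∈ B.domain)
    (BY : H →L[ℂ] H) (hBY : ∀ g : H, BY g = B ⟨Y g, hYrange g⟩)
    (hBYtc : traceNorm BY < ⊤) :
    traceNorm (A.comp Y) < ⊤ ∧ traceNorm (A.comp Y) ≤ traceNorm BY := by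
  have hmono : ∀ x, ‖(A.comp Y) x‖ ≤ ‖BY x‖ := by
    intro x
    rw [ContinuousLinearMap.comp_apply, hBY x]
    exact hAB (Y x) (hYrange x)
  have hle := traceNorm_mono (A.comp Y) BY hmono
  exact ⟨lt_of_le_of_lt hle hBYtc, hle⟩
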